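/- Let C0 ≥ 1, h ≥ 0, t ∈ ℝ, u = it + h, and let X_1,…,X_n be 1-dependent random variables taking values in the nonnegative integers with X_i ≤ C0 almost surely. Set a = e^{hC0}(2+h)√C0 and assume a²·max_{1≤j≤n} ν_1(j) ≤ 1/100. Then Heinrich's functions φ_1(u),…,φ_n(u) are well-defined (all denominators in the recursion are nonzero) and for every k = 1,…,n: |φ_k(u) − 1| ≤ (a²/6)[10ν_1(k−1) + 13ν_1(k)], |φ_k(u) − 1| ≤ 1/25, and 1/|φ_k(u)| ≤ 10/9, where ν_1(k) = E[X_k] and ν_1(0) = 0. -/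

import Mathlib

open MeasureTheory ProbabilityTheory Filter Finset
open scoped BigOperators

/-- `m`-th factorial moment `ν_m = E[X(X-1)⋯(X-m+1)]` of a ℕ-valued random variable. -/
noncomputable def facMoment {Ω : Type*} [MeasurableSpace Ω] (μ : Measure Ω)
    (X : Ω → ℕ) (m : ℕ) : ℝ :=
  ∫ ω, (Nat.descFactorial (X ω) m : ℝ) ∂μ

/-- `X 1, …, X n` is a 1-dependent sequence: for `1 ≤ r ≤ n - 2` the σ-algebra
generated by `X 1, …, X r` is independent of the one generated by `X (r+2), …, X n`. -/
def OneDependent {Ω : Type*} [MeasurableSpace Ω] (μ : Measure Ω) (n : ℕ)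
    (X : ℕ → Ω → ℕ) : Prop :=
  ∀ r : ℕ, 1 ≤ r → r + 2 ≤ n →
    Indep (⨆ i ∈ Finset.Icc 1 r, MeasurableSpace.comap (X i) ⊤)
          (⨆ i ∈ Finset.Icc (r + 2) n, MeasurableSpace.comap (X i) ⊤) μ

/-- Heinrich's cumulant functional `Ê(U_j, …, U_k)`, defined recursively by
`Ê(U_j) = E U_j` and
`Ê(U_j,…,U_k) = E[U_j⋯U_k] - Σ_{l=j}^{k-1} Ê(U_j,…,U_l)·E[U_{l+1}⋯U_k]`. -/
noncomputable def heinrichE {Ω : Type*} [MeasurableSpace Ω] (μ : Measure Ω)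
    (U : ℕ → Ω → ℂ) (j : ℕ) (k : ℕ) : ℂ :=
  (∫ ω, ∏ i ∈ Finset.Icc j k, U i ω ∂μ)
    - ∑ l ∈ (Finset.Ico j k).attach,
        heinrichE μ U j l.1 * ∫ ω, ∏ i ∈ Finset.Icc (l.1 + 1) k, U i ω ∂μ
termination_by k
decreasing_by exact (Finset.mem_Ico.mp l.2).2

/-- Heinrich's functions `φ_k(u)`: `φ_1(u) = E e^{uX_1}` and, for `k ≥ 2`,
`φ_k(u) = 1 + E Y_k + Σ_{j=1}^{k-1} Ψ_{jk} / (φ_j(u)⋯φ_{k-1}(u))`, where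
`Y_j = e^{uX_j} - 1` and `Ψ_{jk} = Ê(Y_j,…,Y_k)`. -/
noncomputable def heinrichPhi {Ω : Type*} [MeasurableSpace Ω] (μ : Measure Ω)
    (X : ℕ → Ω → ℕ) (u : ℂ) : ℕ → ℂ
  | 0 => 1
  | 1 => ∫ ω, Complex.exp (u * (X 1 ω : ℂ)) ∂μ
  | k + 2 =>
      1 + (∫ ω, (Complex.exp (u * (X (k + 2) ω : ℂ)) - 1) ∂μ)
        + ∑ j ∈ (Finset.Icc 1 (k + 1)).attach,
            heinrichE μ (fun i ω => Complex.exp (u * (X i ω : ℂ)) - 1) j.1 (k + 2) /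
              ∏ i ∈ (Finset.Icc j.1 (k + 1)).attach, heinrichPhi μ X u i.1
termination_by k => k
decreasing_by
  exact lt_of_le_of_lt (Finset.mem_Icc.mp i.2).2 (Nat.lt_succ_self _)


/-! ### Auxiliary lemmas -/

noncomputable def Complex.abs : AbsoluteValue ℂ ℝ :=
  IsAbsoluteValue.toAbsoluteValue (norm : ℂ → ℝ)

lemma Complex.abs_exp (z : ℂ) : Complex.abs (Complex.exp z) = Real.exp z.re :=
  Complex.norm_exp z

lemma Complex.abs_ofReal (r : ℝ) : Complex.abs (r : ℂ) = |r| :=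
  show ‖(r : ℂ)‖ = |r| by simp

section AuxGeneral

lemma sqrt_prod' (s : Finset ℕ) (f : ℕ → ℝ) (hf : ∀ i ∈ s, 0 ≤ f i) :
    Real.sqrt (∏ i ∈ s, f i) = ∏ i ∈ s, Real.sqrt (f i) := by
  induction s using Finset.cons_induction with
  | empty => simp
  | cons a s ha ih =>
    rw [Finset.prod_cons, Finset.prod_cons, Real.sqrt_mul (hf a (Finset.mem_cons_self a s)),
      ih (fun i hi => hf i (Finset.mem_cons.2 (Or.inr hi)))]

lemma exp_sub_one_le' (x : ℝ) : Real.exp x - 1 ≤ x * Real.exp x := by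
  have h1 := Real.add_one_le_exp (-x)
  have h2 := Real.exp_pos x
  rw [Real.exp_neg x] at h1
  have h4 : (1 - x) * Real.exp x ≤ 1 := by
    have := mul_le_mul_of_nonneg_right h1 h2.le
    rwa [inv_mul_cancel₀ h2.ne', add_comm, ← sub_eq_add_neg] at this
  nlinarith

lemma abs_Y_le (h C0 t : ℝ) (hh : 0 ≤ h) (hC0 : 1 ≤ C0) (u : ℂ) (hu : u = t * Complex.I + h)
    (m : ℕ) (hm : (m : ℝ) ≤ C0) :
    Complex.abs (Complex.exp (u * m) - 1) ≤ Real.exp (h * C0) * (2 + h) * m := by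
  rcases Nat.eq_zero_or_pos m with rfl | hm1
  · simp [Complex.exp_zero]
  · have hm1' : (1 : ℝ) ≤ m := by exact_mod_cast hm1
    have hsplit : u * m = (t * m) * Complex.I + ((h * m : ℝ) : ℂ) := by
      rw [hu]; push_cast; ring
    have hexp : Complex.exp (u * m)
        = Complex.exp ((t * m) * Complex.I) * Complex.exp ((h * m : ℝ) : ℂ) := by
      rw [hsplit, Complex.exp_add]
    have habs1 : Complex.abs (Complex.exp ((t * m) * Complex.I)) = 1 := by
      rw [Complex.abs_exp]
      simp [Complex.mul_I_re]
    have hre : Complex.exp ((h * m : ℝ) : ℂ) = ((Real.exp (h * m) : ℝ) : ℂ) :=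
      (Complex.ofReal_exp (h * m)).symm
    have key : Complex.abs (Complex.exp (u * m) - 1)
        ≤ (Real.exp (h * m) - 1) + 2 := by
      calc Complex.abs (Complex.exp (u * m) - 1)
          ≤ Complex.abs (Complex.exp (u * m) - Complex.exp ((t * m) * Complex.I))
            + Complex.abs (Complex.exp ((t * m) * Complex.I) - 1) := by
            simpa using Complex.abs.sub_le (Complex.exp (u * m))
              (Complex.exp ((t * m) * Complex.I)) 1
        _ ≤ (Real.exp (h * m) - 1) + 2 := by
            have e1 : Complex.abs (Complex.exp (u * m) - Complex.exp ((t * m) * Complex.I))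
                = Real.exp (h * m) - 1 := by
              rw [hexp, ← mul_one (Complex.exp ((t * m) * Complex.I)), mul_assoc, ← mul_sub,
                map_mul, habs1, one_mul, one_mul, hre]
              rw [← Complex.ofReal_one, ← Complex.ofReal_sub, Complex.abs_ofReal,
                abs_of_nonneg (by linarith [Real.one_le_exp (by positivity : (0:ℝ) ≤ h * m)])]
            have e2 : Complex.abs (Complex.exp ((t * m) * Complex.I) - 1) ≤ 2 := by
              calc Complex.abs (Complex.exp ((t * m) * Complex.I) - 1)
                  ≤ Complex.abs (Complex.exp ((t * m) * Complex.I)) + Complex.abs 1 := by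
                    simpa [sub_eq_add_neg] using Complex.abs.add_le
                      (Complex.exp ((t * m) * Complex.I)) (-1)
                _ = 2 := by rw [habs1, map_one]; norm_num
            linarith
    have h5 : Real.exp (h * m) - 1 ≤ h * m * Real.exp (h * m) := exp_sub_one_le' (h * m)
    have h6 : Real.exp (h * m) ≤ Real.exp (h * C0) :=
      Real.exp_le_exp.2 (by nlinarith)
    have h7 : (1:ℝ) ≤ Real.exp (h * C0) := Real.one_le_exp (by positivity)
    have h8 : (0:ℝ) ≤ Real.exp (h * m) := (Real.exp_pos _).le
    nlinarith [mul_le_mul_of_nonneg_left h6 (by positivity : (0:ℝ) ≤ h * m)]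

lemma integral_CS {Ω : Type*} [MeasurableSpace Ω] (μ : Measure Ω) [IsProbabilityMeasure μ]
    (f g : Ω → ℝ) (c : ℝ)
    (hfm : AEStronglyMeasurable f μ) (hgm : AEStronglyMeasurable g μ)
    (hfb : ∀ᵐ ω ∂μ, ‖f ω‖ ≤ c) (hgb : ∀ᵐ ω ∂μ, ‖g ω‖ ≤ c)
    (hf0 : 0 ≤ᵐ[μ] f) (hg0 : 0 ≤ᵐ[μ] g) :
    ∫ ω, f ω * g ω ∂μ ≤ Real.sqrt (∫ ω, f ω ^ 2 ∂μ) * Real.sqrt (∫ ω, g ω ^ 2 ∂μ) := by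
  have hpq : Real.HolderConjugate 2 2 := Real.holderConjugate_iff.mpr ⟨one_lt_two, by norm_num⟩
  have hf2 : MemLp f (ENNReal.ofReal 2) μ := MemLp.of_bound hfm c hfb
  have hg2 : MemLp g (ENNReal.ofReal 2) μ := MemLp.of_bound hgm c hgb
  have key := integral_mul_le_Lp_mul_Lq_of_nonneg hpq hf0 hg0 hf2 hg2
  have hrw : ∀ (f' : Ω → ℝ), (0 ≤ᵐ[μ] f') → (∫ ω, f' ω ^ (2:ℝ) ∂μ) ^ ((1:ℝ)/2)
      = Real.sqrt (∫ ω, f' ω ^ 2 ∂μ) := by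
    intro f' h0
    rw [Real.sqrt_eq_rpow]
    congr 1
    refine integral_congr_ae ?_
    filter_upwards [h0] with ω hω
    rw [← Real.rpow_natCast (f' ω) 2]
    norm_num
  rw [hrw f hf0, hrw g hg0] at key
  exact key

end AuxGeneral

section Fact
variable {Ω : Type*} [MeasurableSpace Ω] {μ : Measure Ω} [IsProbabilityMeasure μ]
  {n : ℕ} {X : ℕ → Ω → ℕ} {i : ℕ}

lemma integrable_comp (hX : Measurable (X i)) (g : ℕ → ℝ) (c : ℝ) (hc : ∀ m, |g m| ≤ c) :
    Integrable (fun ω => g (X i ω)) μ := by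
  refine Integrable.mono' (integrable_const c) (measurable_from_nat.comp hX).aestronglyMeasurable
    (Filter.Eventually.of_forall fun ω => ?_)
  simpa [Real.norm_eq_abs] using hc (X i ω)

lemma integrable_prod_comp (hX : ∀ i, Measurable (X i)) (S : Finset ℕ) (g : ℕ → ℕ → ℝ)
    (c : ℝ) (hc0 : 0 ≤ c) (hc : ∀ i m, |g i m| ≤ c) :
    Integrable (fun ω => ∏ i ∈ S, g i (X i ω)) μ := by
  refine Integrable.mono' (integrable_const (c ^ S.card))
    (Finset.measurable_prod S fun i _ => measurable_from_nat.comp (hX i)).aestronglyMeasurable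
    (Filter.Eventually.of_forall fun ω => ?_)
  rw [Real.norm_eq_abs, Finset.abs_prod]
  calc ∏ i ∈ S, |g i (X i ω)| ≤ ∏ i ∈ S, c :=
        Finset.prod_le_prod (fun i _ => abs_nonneg _) (fun i _ => hc i (X i ω))
    _ = c ^ S.card := by rw [Finset.prod_const]

lemma prod_integral_of_gaps (hX : ∀ i, Measurable (X i)) (hdep : OneDependent μ n X)
    (g : ℕ → ℕ → ℝ) (c : ℝ) (hc : ∀ i m, |g i m| ≤ c) :
    ∀ S : Finset ℕ, (∀ i ∈ S, 1 ≤ i ∧ i ≤ n) → (∀ i ∈ S, ∀ j ∈ S, i < j → i + 2 ≤ j) →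
    ∫ ω, ∏ i ∈ S, g i (X i ω) ∂μ = ∏ i ∈ S, ∫ ω, g i (X i ω) ∂μ := by
  have hc0 : 0 ≤ c := le_trans (abs_nonneg _) (hc 0 0)
  intro S
  induction S using Finset.induction_on_min with
  | empty => simp
  | insert a S hlt ih =>
    intro hrange hgap
    have haS : a ∉ S := fun hmem => lt_irrefl a (hlt a hmem)
    rcases S.eq_empty_or_nonempty with rfl | hS
    · simp
    · have hsub : ∀ x ∈ S, x ∈ Finset.Icc (a + 2) n := by
        intro x hx
        exact Finset.mem_Icc.2 ⟨hgap a (Finset.mem_insert_self a S) x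
          (Finset.mem_insert_of_mem hx) (hlt x hx), (hrange x (Finset.mem_insert_of_mem hx)).2⟩
      have han : a + 2 ≤ n := by
        obtain ⟨x, hx⟩ := hS
        exact le_trans (Finset.mem_Icc.1 (hsub x hx)).1 (hrange x (Finset.mem_insert_of_mem hx)).2
      have hindep := hdep a (hrange a (Finset.mem_insert_self a S)).1 han
      have hF : Measurable[⨆ i ∈ Finset.Icc 1 a, MeasurableSpace.comap (X i) ⊤]
          (fun ω => g a (X a ω)) := by
        refine (measurable_from_nat.comp (Measurable.of_comap_le le_rfl)).mono ?_ le_rfl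
        exact le_iSup₂ (f := fun i (_ : i ∈ Finset.Icc 1 a) => MeasurableSpace.comap (X i) ⊤) a
          (Finset.mem_Icc.2 ⟨(hrange a (Finset.mem_insert_self a S)).1, le_rfl⟩)
      have hG : Measurable[⨆ i ∈ Finset.Icc (a + 2) n, MeasurableSpace.comap (X i) ⊤]
          (fun ω => ∏ i ∈ S, g i (X i ω)) := by
        refine Finset.measurable_prod S fun i hi => ?_
        refine (measurable_from_nat.comp (Measurable.of_comap_le le_rfl)).mono ?_ le_rfl
        exact le_iSup₂ (f := fun j (_ : j ∈ Finset.Icc (a + 2) n) => MeasurableSpace.comap (X j) ⊤)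
          i (hsub i hi)
      have hIF : IndepFun (fun ω => g a (X a ω)) (fun ω => ∏ i ∈ S, g i (X i ω)) μ := by
        rw [IndepFun_iff_Indep]
        exact indep_of_indep_of_le_right
          (indep_of_indep_of_le_left hindep (measurable_iff_comap_le.1 hF))
          (measurable_iff_comap_le.1 hG)
      simp only [Finset.prod_insert haS]
      have this2 : (∫ ω, g a (X a ω) * ∏ i ∈ S, g i (X i ω) ∂μ)
          = (∫ ω, g a (X a ω) ∂μ) * ∫ ω, ∏ i ∈ S, g i (X i ω) ∂μ :=
        hIF.integral_mul_eq_mul_integral (integrable_comp (hX a) (g a) c (hc a)).aestronglyMeasurable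
          (integrable_prod_comp hX S g c hc0 hc).aestronglyMeasurable
      rw [this2, ih (fun i hi => hrange i (Finset.mem_insert_of_mem hi))
        (fun i hi j hj hij => hgap i (Finset.mem_insert_of_mem hi) j
          (Finset.mem_insert_of_mem hj) hij)]

end Fact

section Moments
variable {Ω : Type*} [MeasurableSpace Ω] {μ : Measure Ω} [IsProbabilityMeasure μ]
  {C0 h t a : ℝ} {u : ℂ} {n : ℕ} {X : ℕ → Ω → ℕ}

lemma facMoment_one_eq (Z : Ω → ℕ) : facMoment μ Z 1 = ∫ ω, (Z ω : ℝ) ∂μ := by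
  simp [facMoment]

lemma facMoment_one_nonneg (Z : Ω → ℕ) : 0 ≤ facMoment μ Z 1 :=
  integral_nonneg fun ω => by positivity

lemma two_le_a (hC0 : 1 ≤ C0) (hh : 0 ≤ h)
    (ha : a = Real.exp (h * C0) * (2 + h) * Real.sqrt C0) : 2 ≤ a := by
  have h1 : (1:ℝ) ≤ Real.exp (h * C0) := Real.one_le_exp (by positivity)
  have h2 : (1:ℝ) ≤ Real.sqrt C0 := by
    rw [show (1:ℝ) = Real.sqrt 1 by simp]
    exact Real.sqrt_le_sqrt hC0
  have e1 : 2 + h ≤ Real.exp (h * C0) * (2 + h) := le_mul_of_one_le_left (by linarith) h1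
  have e2 : Real.exp (h * C0) * (2 + h) ≤ Real.exp (h * C0) * (2 + h) * Real.sqrt C0 :=
    le_mul_of_one_le_right (by positivity) h2
  linarith

lemma integrable_X (hX : Measurable (X j)) (hC0 : 1 ≤ C0)
    (hbdj : ∀ᵐ ω ∂μ, ((X j ω : ℝ)) ≤ C0) : Integrable (fun ω => (X j ω : ℝ)) μ := by
  refine Integrable.mono' (integrable_const C0)
    (measurable_from_nat.comp hX).aestronglyMeasurable ?_
  filter_upwards [hbdj] with ω hω
  rwa [Real.norm_eq_abs, abs_of_nonneg (by positivity)]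

lemma absY_ae_le (hC0 : 1 ≤ C0) (hh : 0 ≤ h) (hu : u = t * Complex.I + h)
    (ha : a = Real.exp (h * C0) * (2 + h) * Real.sqrt C0)
    (hbdj : ∀ᵐ ω ∂μ, ((X j ω : ℝ)) ≤ C0) :
    ∀ᵐ ω ∂μ, Complex.abs (Complex.exp (u * (X j ω : ℂ)) - 1) ≤ a * (X j ω : ℝ)
      ∧ Complex.abs (Complex.exp (u * (X j ω : ℂ)) - 1) ^ 2 ≤ a ^ 2 * (X j ω : ℝ)
      ∧ Complex.abs (Complex.exp (u * (X j ω : ℂ)) - 1) ≤ a * C0 := by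
  filter_upwards [hbdj] with ω hω
  set m : ℕ := X j ω
  have key := abs_Y_le h C0 t hh hC0 u hu m hω
  have h1 : (1:ℝ) ≤ Real.exp (h * C0) := Real.one_le_exp (by positivity)
  have h2 : (1:ℝ) ≤ Real.sqrt C0 := by
    rw [show (1:ℝ) = Real.sqrt 1 by simp]
    exact Real.sqrt_le_sqrt hC0
  have h3 : Real.sqrt C0 ^ 2 = C0 := Real.sq_sqrt (by linarith)
  have hm0 : (0:ℝ) ≤ (m:ℝ) := Nat.cast_nonneg m
  have habs0 : (0:ℝ) ≤ Complex.abs (Complex.exp (u * (m : ℂ)) - 1) := Complex.abs.nonneg _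
  have hE : (0:ℝ) ≤ Real.exp (h * C0) * (2 + h) := by positivity
  refine ⟨?_, ?_, ?_⟩
  · calc Complex.abs (Complex.exp (u * (m : ℂ)) - 1) ≤ Real.exp (h * C0) * (2 + h) * m := key
      _ ≤ a * m := by rw [ha]; nlinarith
  · calc Complex.abs (Complex.exp (u * (m : ℂ)) - 1) ^ 2
        ≤ (Real.exp (h * C0) * (2 + h) * m) ^ 2 := by nlinarith
      _ = (Real.exp (h * C0) * (2 + h)) ^ 2 * m ^ 2 := by ring
      _ ≤ (Real.exp (h * C0) * (2 + h)) ^ 2 * (C0 * m) := by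
          have hmm : (m:ℝ) ^ 2 ≤ C0 * m := by nlinarith
          exact mul_le_mul_of_nonneg_left hmm (by positivity)
      _ = a ^ 2 * m := by rw [ha, mul_pow, mul_pow, h3]; ring
  · calc Complex.abs (Complex.exp (u * (m : ℂ)) - 1) ≤ Real.exp (h * C0) * (2 + h) * m := key
      _ ≤ Real.exp (h * C0) * (2 + h) * C0 := mul_le_mul_of_nonneg_left hω hE
      _ ≤ a * C0 := by
          rw [ha]
          exact mul_le_mul_of_nonneg_right (le_mul_of_one_le_right hE h2) (by linarith)

lemma measurable_absY (hX : Measurable (X j)) :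
    Measurable (fun ω => Complex.abs (Complex.exp (u * (X j ω : ℂ)) - 1)) :=
  (measurable_from_nat (f := fun m : ℕ => Complex.abs (Complex.exp (u * (m : ℂ)) - 1))).comp hX

lemma integral_absY_le (hC0 : 1 ≤ C0) (hh : 0 ≤ h) (hu : u = t * Complex.I + h)
    (ha : a = Real.exp (h * C0) * (2 + h) * Real.sqrt C0)
    (hX : Measurable (X j)) (hbdj : ∀ᵐ ω ∂μ, ((X j ω : ℝ)) ≤ C0) :
    ∫ ω, Complex.abs (Complex.exp (u * (X j ω : ℂ)) - 1) ∂μ ≤ a * facMoment μ (X j) 1 := by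
  rw [facMoment_one_eq, ← integral_const_mul]
  have ha0 : (0:ℝ) ≤ a := by rw [ha]; positivity
  refine integral_mono_ae ?_ (((integrable_X hX hC0 hbdj)).const_mul a) ?_
  · refine Integrable.mono' (integrable_const (a * C0))
      (measurable_absY hX).aestronglyMeasurable ?_
    filter_upwards [absY_ae_le hC0 hh hu ha hbdj] with ω hω
    rw [Real.norm_eq_abs, abs_of_nonneg (Complex.abs.nonneg _)]
    exact hω.2.2
  · filter_upwards [absY_ae_le hC0 hh hu ha hbdj] with ω hω
    exact hω.1

lemma integral_absY_sq_le (hC0 : 1 ≤ C0) (hh : 0 ≤ h) (hu : u = t * Complex.I + h)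
    (ha : a = Real.exp (h * C0) * (2 + h) * Real.sqrt C0)
    (hX : Measurable (X j)) (hbdj : ∀ᵐ ω ∂μ, ((X j ω : ℝ)) ≤ C0) :
    ∫ ω, Complex.abs (Complex.exp (u * (X j ω : ℂ)) - 1) ^ 2 ∂μ
      ≤ a ^ 2 * facMoment μ (X j) 1 := by
  rw [facMoment_one_eq, ← integral_const_mul]
  refine integral_mono_ae ?_ (((integrable_X hX hC0 hbdj)).const_mul (a ^ 2)) ?_
  · refine Integrable.mono' (integrable_const ((a * C0) ^ 2))
      ((measurable_absY hX).pow_const 2).aestronglyMeasurable ?_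
    filter_upwards [absY_ae_le hC0 hh hu ha hbdj] with ω hω
    rw [Real.norm_eq_abs, abs_of_nonneg (by positivity)]
    have h0 := Complex.abs.nonneg (Complex.exp (u * (X j ω : ℂ)) - 1)
    nlinarith [hω.2.2]
  · filter_upwards [absY_ae_le hC0 hh hu ha hbdj] with ω hω
    exact hω.2.1

end Moments

section KeyBound
variable {Ω : Type*} [MeasurableSpace Ω] {μ : Measure Ω} [IsProbabilityMeasure μ]
  {C0 h t a : ℝ} {u : ℂ} {n : ℕ} {X : ℕ → Ω → ℕ}

/-- deterministic bound on the truncated `|Y|²`. -/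
lemma trunc_g_bound (hC0 : 1 ≤ C0) (hh : 0 ≤ h) (hu : u = t * Complex.I + h)
    (ha : a = Real.exp (h * C0) * (2 + h) * Real.sqrt C0) (m : ℕ) :
    |if (m : ℝ) ≤ C0 then Complex.abs (Complex.exp (u * (m : ℂ)) - 1) ^ 2 else 0|
      ≤ (a * C0) ^ 2 := by
  have ha0 : (0:ℝ) ≤ a := by rw [ha]; positivity
  split_ifs with hm
  · have key := abs_Y_le h C0 t hh hC0 u hu m hm
    have h1 : (1:ℝ) ≤ Real.exp (h * C0) := Real.one_le_exp (by positivity)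
    have h2 : (1:ℝ) ≤ Real.sqrt C0 := by
      rw [show (1:ℝ) = Real.sqrt 1 by simp]
      exact Real.sqrt_le_sqrt hC0
    have hE : (0:ℝ) ≤ Real.exp (h * C0) * (2 + h) := by positivity
    have hb : Complex.abs (Complex.exp (u * (m : ℂ)) - 1) ≤ a * C0 := by
      calc Complex.abs (Complex.exp (u * (m : ℂ)) - 1)
          ≤ Real.exp (h * C0) * (2 + h) * m := key
        _ ≤ Real.exp (h * C0) * (2 + h) * C0 := mul_le_mul_of_nonneg_left hm hE
        _ ≤ a * C0 := by
            rw [ha]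
            exact mul_le_mul_of_nonneg_right (le_mul_of_one_le_right hE h2) (by linarith)
    have h0 := Complex.abs.nonneg (Complex.exp (u * (m : ℂ)) - 1)
    rw [abs_of_nonneg (by positivity)]
    nlinarith
  · simp [abs_of_nonneg]
    positivity

lemma integral_prod_sq_eq (hC0 : 1 ≤ C0) (hh : 0 ≤ h) (hu : u = t * Complex.I + h)
    (ha : a = Real.exp (h * C0) * (2 + h) * Real.sqrt C0)
    (hX : ∀ i, Measurable (X i)) (hdep : OneDependent μ n X)
    (hbd : ∀ i, 1 ≤ i → i ≤ n → ∀ᵐ ω ∂μ, ((X i ω : ℝ)) ≤ C0)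
    (S : Finset ℕ) (hrange : ∀ i ∈ S, 1 ≤ i ∧ i ≤ n)
    (hgap : ∀ i ∈ S, ∀ j ∈ S, i < j → i + 2 ≤ j) :
    ∫ ω, ∏ i ∈ S, Complex.abs (Complex.exp (u * (X i ω : ℂ)) - 1) ^ 2 ∂μ
      = ∏ i ∈ S, ∫ ω, Complex.abs (Complex.exp (u * (X i ω : ℂ)) - 1) ^ 2 ∂μ := by
  set g : ℕ → ℕ → ℝ := fun _ m =>
    if (m : ℝ) ≤ C0 then Complex.abs (Complex.exp (u * (m : ℂ)) - 1) ^ 2 else 0 with hg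
  have hgb : ∀ i m, |g i m| ≤ (a * C0) ^ 2 := fun i m => trunc_g_bound hC0 hh hu ha m
  have hae : ∀ᵐ ω ∂μ, ∀ i ∈ S, (X i ω : ℝ) ≤ C0 := by
    rw [Filter.eventually_all_finset]
    intro i hi
    exact hbd i (hrange i hi).1 (hrange i hi).2
  have key := prod_integral_of_gaps hX hdep g ((a * C0) ^ 2) hgb S hrange hgap
  have e1 : ∫ ω, ∏ i ∈ S, g i (X i ω) ∂μ
      = ∫ ω, ∏ i ∈ S, Complex.abs (Complex.exp (u * (X i ω : ℂ)) - 1) ^ 2 ∂μ := by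
    refine integral_congr_ae ?_
    filter_upwards [hae] with ω hω
    exact Finset.prod_congr rfl fun i hi => by simp [hg, hω i hi]
  have e2 : ∀ i ∈ S, ∫ ω, g i (X i ω) ∂μ
      = ∫ ω, Complex.abs (Complex.exp (u * (X i ω : ℂ)) - 1) ^ 2 ∂μ := by
    intro i hi
    refine integral_congr_ae ?_
    filter_upwards [hbd i (hrange i hi).1 (hrange i hi).2] with ω hω
    simp [hg, hω]
  rw [← e1, key]
  exact Finset.prod_congr rfl e2

lemma abs_integral_prodY_le (hC0 : 1 ≤ C0) (hh : 0 ≤ h) (hu : u = t * Complex.I + h)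
    (ha : a = Real.exp (h * C0) * (2 + h) * Real.sqrt C0)
    (hX : ∀ i, Measurable (X i)) (hdep : OneDependent μ n X)
    (hbd : ∀ i, 1 ≤ i → i ≤ n → ∀ᵐ ω ∂μ, ((X i ω : ℝ)) ≤ C0)
    (j k : ℕ) (hj : 1 ≤ j) (hk : k ≤ n) :
    Complex.abs (∫ ω, ∏ i ∈ Finset.Icc j k, (Complex.exp (u * (X i ω : ℂ)) - 1) ∂μ)
      ≤ ∏ i ∈ Finset.Icc j k,
          Real.sqrt (∫ ω, Complex.abs (Complex.exp (u * (X i ω : ℂ)) - 1) ^ 2 ∂μ) := by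
  have ha0 : (0:ℝ) ≤ a := by rw [ha]; positivity
  set G : ℕ → Ω → ℝ := fun i ω => Complex.abs (Complex.exp (u * (X i ω : ℂ)) - 1) with hG
  have hGmeas : ∀ i, Measurable (G i) := fun i =>
    (measurable_from_nat (f := fun m : ℕ => Complex.abs (Complex.exp (u * (m : ℂ)) - 1))).comp
      (hX i)
  have hG0 : ∀ i ω, 0 ≤ G i ω := fun i ω => Complex.abs.nonneg _
  have hrange : ∀ i ∈ Finset.Icc j k, 1 ≤ i ∧ i ≤ n := fun i hi =>
    ⟨le_trans hj (Finset.mem_Icc.1 hi).1, le_trans (Finset.mem_Icc.1 hi).2 hk⟩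
  -- step 1: pass to the integral of the product of absolute values
  have step1 : Complex.abs (∫ ω, ∏ i ∈ Finset.Icc j k, (Complex.exp (u * (X i ω : ℂ)) - 1) ∂μ)
      ≤ ∫ ω, ∏ i ∈ Finset.Icc j k, G i ω ∂μ := by
    rw [show ∀ z : ℂ, Complex.abs z = ‖z‖ from fun z => rfl]
    refine le_trans (norm_integral_le_integral_norm _) (le_of_eq (integral_congr_ae ?_))
    filter_upwards with ω
    rw [norm_prod]
    rfl
  set Se := (Finset.Icc j k).filter (fun i => Even (i - j)) with hSe
  set So := (Finset.Icc j k).filter (fun i => ¬ Even (i - j)) with hSo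
  have hsplit : ∀ ω, (∏ i ∈ Finset.Icc j k, G i ω)
      = (∏ i ∈ Se, G i ω) * (∏ i ∈ So, G i ω) := fun ω =>
    (Finset.prod_filter_mul_prod_filter_not (Finset.Icc j k) _ _).symm
  -- gap conditions
  have hgapSe : ∀ i₁ ∈ Se, ∀ i₂ ∈ Se, i₁ < i₂ → i₁ + 2 ≤ i₂ := by
    intro i₁ h₁ i₂ h₂ hlt
    obtain ⟨hm₁, hp₁⟩ := Finset.mem_filter.1 h₁
    obtain ⟨hm₂, hp₂⟩ := Finset.mem_filter.1 h₂
    obtain ⟨p₁, hp₁'⟩ := hp₁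
    obtain ⟨p₂, hp₂'⟩ := hp₂
    have hj₁ := (Finset.mem_Icc.1 hm₁).1
    have hj₂ := (Finset.mem_Icc.1 hm₂).1
    omega
  have hgapSo : ∀ i₁ ∈ So, ∀ i₂ ∈ So, i₁ < i₂ → i₁ + 2 ≤ i₂ := by
    intro i₁ h₁ i₂ h₂ hlt
    obtain ⟨hm₁, hp₁⟩ := Finset.mem_filter.1 h₁
    obtain ⟨hm₂, hp₂⟩ := Finset.mem_filter.1 h₂
    have hj₁ := (Finset.mem_Icc.1 hm₁).1
    have hj₂ := (Finset.mem_Icc.1 hm₂).1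
    obtain ⟨p₁, hp₁'⟩ := Nat.not_even_iff_odd.1 hp₁
    obtain ⟨p₂, hp₂'⟩ := Nat.not_even_iff_odd.1 hp₂
    omega
  have hrangeSe : ∀ i ∈ Se, 1 ≤ i ∧ i ≤ n := fun i hi => hrange i (Finset.mem_filter.1 hi).1
  have hrangeSo : ∀ i ∈ So, 1 ≤ i ∧ i ≤ n := fun i hi => hrange i (Finset.mem_filter.1 hi).1
  have hfacSe := integral_prod_sq_eq hC0 hh hu ha hX hdep hbd Se hrangeSe hgapSe
  have hfacSo := integral_prod_sq_eq hC0 hh hu ha hX hdep hbd So hrangeSo hgapSo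
  set b : ℝ := a * C0 with hb
  have hb1 : (1:ℝ) ≤ b := by
    have := two_le_a hC0 hh ha
    nlinarith
  have haeG : ∀ᵐ ω ∂μ, ∀ i ∈ Finset.Icc j k, G i ω ≤ b := by
    rw [Filter.eventually_all_finset]
    intro i hi
    filter_upwards [absY_ae_le hC0 hh hu ha (hbd i (hrange i hi).1 (hrange i hi).2)] with ω hω
    exact hω.2.2
  have hprodbound : ∀ (T : Finset ℕ), T ⊆ Finset.Icc j k →
      ∀ᵐ ω ∂μ, ‖∏ i ∈ T, G i ω‖ ≤ b ^ (Finset.Icc j k).card := by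
    intro T hT
    filter_upwards [haeG] with ω hω
    rw [Real.norm_eq_abs, abs_of_nonneg (Finset.prod_nonneg fun i _ => hG0 i ω)]
    calc ∏ i ∈ T, G i ω ≤ ∏ i ∈ T, b :=
          Finset.prod_le_prod (fun i _ => hG0 i ω) (fun i hi => hω i (hT hi))
      _ = b ^ T.card := by rw [Finset.prod_const]
      _ ≤ b ^ (Finset.Icc j k).card := pow_le_pow_right₀ hb1 (Finset.card_le_card hT)
  have hCS := integral_CS μ (fun ω => ∏ i ∈ Se, G i ω) (fun ω => ∏ i ∈ So, G i ω)
    (b ^ (Finset.Icc j k).card)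
    (Finset.measurable_prod Se fun i _ => hGmeas i).aestronglyMeasurable
    (Finset.measurable_prod So fun i _ => hGmeas i).aestronglyMeasurable
    (hprodbound Se (Finset.filter_subset _ _)) (hprodbound So (Finset.filter_subset _ _))
    (Filter.Eventually.of_forall fun ω => Finset.prod_nonneg fun i _ => hG0 i ω)
    (Filter.Eventually.of_forall fun ω => Finset.prod_nonneg fun i _ => hG0 i ω)
  have hsqT : ∀ (T : Finset ℕ), ∫ ω, (∏ i ∈ T, G i ω) ^ 2 ∂μ
      = ∫ ω, ∏ i ∈ T, (G i ω) ^ 2 ∂μ := by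
    intro T
    refine integral_congr_ae (Filter.Eventually.of_forall fun ω => ?_)
    show (∏ i ∈ T, G i ω) ^ 2 = ∏ i ∈ T, (G i ω) ^ 2
    exact (Finset.prod_pow T 2 (fun i => G i ω)).symm
  have hint_nonneg : ∀ i, 0 ≤ ∫ ω, (G i ω) ^ 2 ∂μ := fun i =>
    integral_nonneg fun ω => by positivity
  calc Complex.abs (∫ ω, ∏ i ∈ Finset.Icc j k, (Complex.exp (u * (X i ω : ℂ)) - 1) ∂μ)
      ≤ ∫ ω, ∏ i ∈ Finset.Icc j k, G i ω ∂μ := step1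
    _ = ∫ ω, (∏ i ∈ Se, G i ω) * (∏ i ∈ So, G i ω) ∂μ :=
        integral_congr_ae (Filter.Eventually.of_forall fun ω => hsplit ω)
    _ ≤ Real.sqrt (∫ ω, (∏ i ∈ Se, G i ω) ^ 2 ∂μ)
        * Real.sqrt (∫ ω, (∏ i ∈ So, G i ω) ^ 2 ∂μ) := hCS
    _ = (∏ i ∈ Se, Real.sqrt (∫ ω, (G i ω) ^ 2 ∂μ))
        * (∏ i ∈ So, Real.sqrt (∫ ω, (G i ω) ^ 2 ∂μ)) := by
        rw [hsqT Se, hsqT So, hfacSe, hfacSo,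
          sqrt_prod' Se _ (fun i _ => hint_nonneg i), sqrt_prod' So _ (fun i _ => hint_nonneg i)]
    _ = ∏ i ∈ Finset.Icc j k, Real.sqrt (∫ ω, (G i ω) ^ 2 ∂μ) :=
        Finset.prod_filter_mul_prod_filter_not (Finset.Icc j k) _ _

end KeyBound

section Cumulant
variable {Ω : Type*} [MeasurableSpace Ω] {μ : Measure Ω} [IsProbabilityMeasure μ]
  {C0 h t a : ℝ} {u : ℂ} {n : ℕ} {X : ℕ → Ω → ℕ}

/-- `ρ_i = (E|Y_i|²)^{1/2}`. -/
noncomputable def rhoD (μ : Measure Ω) (X : ℕ → Ω → ℕ) (u : ℂ) (i : ℕ) : ℝ :=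
  Real.sqrt (∫ ω, Complex.abs (Complex.exp (u * (X i ω : ℂ)) - 1) ^ 2 ∂μ)

lemma rhoD_nonneg (i : ℕ) : 0 ≤ rhoD μ X u i := Real.sqrt_nonneg _

lemma my_geom_sum_two (N : ℕ) : (∑ i ∈ Finset.range N, (2:ℝ) ^ i) = 2 ^ N - 1 := by
  induction N with
  | zero => simp
  | succ N ih => rw [Finset.sum_range_succ, ih]; ring

lemma heinrichE_bound (hC0 : 1 ≤ C0) (hh : 0 ≤ h) (hu : u = t * Complex.I + h)
    (ha : a = Real.exp (h * C0) * (2 + h) * Real.sqrt C0)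
    (hX : ∀ i, Measurable (X i)) (hdep : OneDependent μ n X)
    (hbd : ∀ i, 1 ≤ i → i ≤ n → ∀ᵐ ω ∂μ, ((X i ω : ℝ)) ≤ C0) :
    ∀ k j, 1 ≤ j → j ≤ k → k ≤ n →
    Complex.abs (heinrichE μ (fun i ω => Complex.exp (u * (X i ω : ℂ)) - 1) j k)
      ≤ 2 ^ (k - j) * ∏ i ∈ Finset.Icc j k, rhoD μ X u i := by
  intro k
  induction k using Nat.strong_induction_on with
  | _ k IH =>
    intro j hj hjk hk
    have hprod_nonneg : ∀ (T : Finset ℕ), 0 ≤ ∏ i ∈ T, rhoD μ X u i :=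
      fun T => Finset.prod_nonneg fun i _ => rhoD_nonneg i
    rw [heinrichE]
    rw [show ∀ z : ℂ, Complex.abs z = ‖z‖ from fun z => rfl]
    refine le_trans (norm_sub_le _ _) ?_
    have hmain : ‖∫ ω, ∏ i ∈ Finset.Icc j k, (Complex.exp (u * (X i ω : ℂ)) - 1) ∂μ‖
        ≤ ∏ i ∈ Finset.Icc j k, rhoD μ X u i :=
      abs_integral_prodY_le hC0 hh hu ha hX hdep hbd j k hj hk
    have hsum : ‖∑ l ∈ (Finset.Ico j k).attach,
        heinrichE μ (fun i ω => Complex.exp (u * (X i ω : ℂ)) - 1) j l.1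
          * ∫ ω, ∏ i ∈ Finset.Icc (l.1 + 1) k, (Complex.exp (u * (X i ω : ℂ)) - 1) ∂μ‖
        ≤ (2 ^ (k - j) - 1) * ∏ i ∈ Finset.Icc j k, rhoD μ X u i := by
      refine le_trans (norm_sum_le _ _) ?_
      have hterm : ∀ l ∈ (Finset.Ico j k).attach,
          ‖heinrichE μ (fun i ω => Complex.exp (u * (X i ω : ℂ)) - 1) j l.1
            * ∫ ω, ∏ i ∈ Finset.Icc (l.1 + 1) k, (Complex.exp (u * (X i ω : ℂ)) - 1) ∂μ‖
          ≤ 2 ^ (l.1 - j) * ∏ i ∈ Finset.Icc j k, rhoD μ X u i := by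
        intro l _
        obtain ⟨hjl, hlk⟩ := Finset.mem_Ico.1 l.2
        rw [norm_mul]
        have h1 : ‖heinrichE μ (fun i ω => Complex.exp (u * (X i ω : ℂ)) - 1) j l.1‖
            ≤ 2 ^ (l.1 - j) * ∏ i ∈ Finset.Icc j l.1, rhoD μ X u i :=
          IH l.1 hlk j hj hjl (le_trans (le_of_lt hlk) hk)
        have h2 : ‖∫ ω, ∏ i ∈ Finset.Icc (l.1 + 1) k, (Complex.exp (u * (X i ω : ℂ)) - 1) ∂μ‖
            ≤ ∏ i ∈ Finset.Icc (l.1 + 1) k, rhoD μ X u i :=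
          abs_integral_prodY_le hC0 hh hu ha hX hdep hbd (l.1 + 1) k
            (le_trans hj (Nat.le_succ_of_le hjl)) hk
        calc ‖heinrichE μ (fun i ω => Complex.exp (u * (X i ω : ℂ)) - 1) j l.1‖
              * ‖∫ ω, ∏ i ∈ Finset.Icc (l.1 + 1) k, (Complex.exp (u * (X i ω : ℂ)) - 1) ∂μ‖
            ≤ (2 ^ (l.1 - j) * ∏ i ∈ Finset.Icc j l.1, rhoD μ X u i)
              * ∏ i ∈ Finset.Icc (l.1 + 1) k, rhoD μ X u i :=
              mul_le_mul h1 h2 (norm_nonneg _) (mul_nonneg (by positivity) (hprod_nonneg _))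
          _ = 2 ^ (l.1 - j) * ((∏ i ∈ Finset.Icc j l.1, rhoD μ X u i)
              * ∏ i ∈ Finset.Icc (l.1 + 1) k, rhoD μ X u i) := by ring
          _ = 2 ^ (l.1 - j) * ∏ i ∈ Finset.Icc j k, rhoD μ X u i := by
              congr 1
              rw [← Finset.Ico_add_one_right_eq_Icc j l.1, ← Finset.Ico_add_one_right_eq_Icc (l.1 + 1) k,
                ← Finset.Ico_add_one_right_eq_Icc j k]
              exact Finset.prod_Ico_consecutive _ (Nat.le_succ_of_le hjl) (Nat.succ_le_succ (le_of_lt hlk))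
      refine le_trans (Finset.sum_le_sum hterm) ?_
      rw [← Finset.sum_mul]
      have : (∑ l ∈ (Finset.Ico j k).attach, (2:ℝ) ^ (l.1 - j)) = 2 ^ (k - j) - 1 := by
        rw [Finset.sum_attach (Finset.Ico j k) (fun l => (2:ℝ) ^ (l - j)),
          Finset.sum_Ico_eq_sum_range]
        simp only [Nat.add_sub_cancel_left]
        exact my_geom_sum_two (k - j)
      rw [this]
    calc ‖∫ ω, ∏ i ∈ Finset.Icc j k, (Complex.exp (u * (X i ω : ℂ)) - 1) ∂μ‖
          + ‖∑ l ∈ (Finset.Ico j k).attach,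
            heinrichE μ (fun i ω => Complex.exp (u * (X i ω : ℂ)) - 1) j l.1
              * ∫ ω, ∏ i ∈ Finset.Icc (l.1 + 1) k, (Complex.exp (u * (X i ω : ℂ)) - 1) ∂μ‖
        ≤ (∏ i ∈ Finset.Icc j k, rhoD μ X u i)
          + (2 ^ (k - j) - 1) * ∏ i ∈ Finset.Icc j k, rhoD μ X u i := add_le_add hmain hsum
      _ = 2 ^ (k - j) * ∏ i ∈ Finset.Icc j k, rhoD μ X u i := by ring

end Cumulant

section RhoBounds
variable {Ω : Type*} [MeasurableSpace Ω] {μ : Measure Ω} [IsProbabilityMeasure μ]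
  {C0 h t a : ℝ} {u : ℂ} {n : ℕ} {X : ℕ → Ω → ℕ} {j : ℕ}

lemma rhoD_sq_le (hC0 : 1 ≤ C0) (hh : 0 ≤ h) (hu : u = t * Complex.I + h)
    (ha : a = Real.exp (h * C0) * (2 + h) * Real.sqrt C0)
    (hX : Measurable (X j)) (hbdj : ∀ᵐ ω ∂μ, ((X j ω : ℝ)) ≤ C0) :
    rhoD μ X u j ^ 2 ≤ a ^ 2 * facMoment μ (X j) 1 := by
  rw [rhoD, Real.sq_sqrt (integral_nonneg fun ω => by positivity)]
  exact integral_absY_sq_le hC0 hh hu ha hX hbdj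

lemma rhoD_le_tenth (hC0 : 1 ≤ C0) (hh : 0 ≤ h) (hu : u = t * Complex.I + h)
    (ha : a = Real.exp (h * C0) * (2 + h) * Real.sqrt C0)
    (hX : Measurable (X j)) (hbdj : ∀ᵐ ω ∂μ, ((X j ω : ℝ)) ≤ C0)
    (hsm : a ^ 2 * facMoment μ (X j) 1 ≤ 1 / 100) :
    rhoD μ X u j ≤ 1 / 10 := by
  have h1 := rhoD_sq_le hC0 hh hu ha hX hbdj
  have h2 := rhoD_nonneg (μ := μ) (X := X) (u := u) j
  nlinarith

lemma rhoD_pair_le (hC0 : 1 ≤ C0) (hh : 0 ≤ h) (hu : u = t * Complex.I + h)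
    (ha : a = Real.exp (h * C0) * (2 + h) * Real.sqrt C0)
    {j₁ j₂ : ℕ} (hX₁ : Measurable (X j₁)) (hX₂ : Measurable (X j₂))
    (hbd₁ : ∀ᵐ ω ∂μ, ((X j₁ ω : ℝ)) ≤ C0) (hbd₂ : ∀ᵐ ω ∂μ, ((X j₂ ω : ℝ)) ≤ C0) :
    rhoD μ X u j₁ * rhoD μ X u j₂
      ≤ a ^ 2 / 2 * (facMoment μ (X j₁) 1 + facMoment μ (X j₂) 1) := by
  have h1 := rhoD_sq_le hC0 hh hu ha hX₁ hbd₁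
  have h2 := rhoD_sq_le hC0 hh hu ha hX₂ hbd₂
  have h3 := rhoD_nonneg (μ := μ) (X := X) (u := u) j₁
  have h4 := rhoD_nonneg (μ := μ) (X := X) (u := u) j₂
  nlinarith [sq_nonneg (rhoD μ X u j₁ - rhoD μ X u j₂)]

lemma integrable_Y (hC0 : 1 ≤ C0) (hh : 0 ≤ h) (hu : u = t * Complex.I + h)
    (ha : a = Real.exp (h * C0) * (2 + h) * Real.sqrt C0)
    (hX : Measurable (X j)) (hbdj : ∀ᵐ ω ∂μ, ((X j ω : ℝ)) ≤ C0) :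
    Integrable (fun ω => Complex.exp (u * (X j ω : ℂ)) - 1) μ := by
  refine Integrable.mono' (integrable_const (a * C0))
    ((measurable_from_nat (f := fun m : ℕ => Complex.exp (u * (m : ℂ)) - 1)).comp
      hX).aestronglyMeasurable ?_
  filter_upwards [absY_ae_le hC0 hh hu ha hbdj] with ω hω
  exact hω.2.2

lemma abs_integral_Y_le (hC0 : 1 ≤ C0) (hh : 0 ≤ h) (hu : u = t * Complex.I + h)
    (ha : a = Real.exp (h * C0) * (2 + h) * Real.sqrt C0)
    (hX : Measurable (X j)) (hbdj : ∀ᵐ ω ∂μ, ((X j ω : ℝ)) ≤ C0) :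
    Complex.abs (∫ ω, (Complex.exp (u * (X j ω : ℂ)) - 1) ∂μ) ≤ a * facMoment μ (X j) 1 := by
  have h1 : Complex.abs (∫ ω, (Complex.exp (u * (X j ω : ℂ)) - 1) ∂μ)
      ≤ ∫ ω, Complex.abs (Complex.exp (u * (X j ω : ℂ)) - 1) ∂μ := by
    rw [show ∀ z : ℂ, Complex.abs z = ‖z‖ from fun z => rfl]
    exact le_trans (norm_integral_le_integral_norm _)
      (le_of_eq (integral_congr_ae (Filter.Eventually.of_forall fun ω => rfl)))
  exact le_trans h1 (integral_absY_le hC0 hh hu ha hX hbdj)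

lemma my_geom29 : ∀ N, (∑ i ∈ Finset.range N, (2/9:ℝ) ^ i) ≤ 9/7 := by
  intro N
  induction N with
  | zero => norm_num
  | succ N ih =>
    rw [Finset.sum_range_succ']
    have : (∑ i ∈ Finset.range N, (2/9:ℝ) ^ (i + 1))
        = (2/9) * ∑ i ∈ Finset.range N, (2/9:ℝ) ^ i := by
      rw [Finset.mul_sum]
      exact Finset.sum_congr rfl fun i _ => by ring
    rw [this, pow_zero]
    nlinarith

lemma geom_tail_le (k' : ℕ) :
    (∑ j ∈ Finset.Icc 1 (k' + 1), (2/9:ℝ) ^ (k' + 2 - j)) ≤ 2/7 := by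
  have e1 : (∑ j ∈ Finset.Icc 1 (k' + 1), (2/9:ℝ) ^ (k' + 2 - j))
      = ∑ i ∈ Finset.range (k' + 1), (2/9:ℝ) ^ (k' + 1 - i) := by
    rw [← Finset.Ico_add_one_right_eq_Icc, Finset.sum_Ico_eq_sum_range]
    refine Finset.sum_congr (by norm_num) fun i _ => by
      congr 1
      omega
  have e2 : (∑ i ∈ Finset.range (k' + 1), (2/9:ℝ) ^ (k' + 1 - i))
      = ∑ i ∈ Finset.range (k' + 1), (2/9:ℝ) ^ (i + 1) := by
    rw [← Finset.sum_range_reflect]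
    refine Finset.sum_congr rfl fun i hi => ?_
    congr 1
    have := Finset.mem_range.1 hi
    omega
  have e3 : (∑ i ∈ Finset.range (k' + 1), (2/9:ℝ) ^ (i + 1))
      = (2/9) * ∑ i ∈ Finset.range (k' + 1), (2/9:ℝ) ^ i := by
    rw [Finset.mul_sum]
    exact Finset.sum_congr rfl fun i _ => by ring
  rw [e1, e2, e3]
  have := my_geom29 (k' + 1)
  nlinarith [Finset.sum_nonneg (fun i (_ : i ∈ Finset.range (k' + 1)) =>
    pow_nonneg (by norm_num : (0:ℝ) ≤ 2/9) i)]

end RhoBounds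

/-- Lemma 4, estimates (26): Heinrich's functions are well-defined (nonzero, so all
denominators in the recursion are nonzero) and close to `1`. Here `ν₁(0) = 0` since
`X 0` is not part of the sequence; we encode `ν₁(k-1)` via natural subtraction with
the hypothesis that `X 0 = 0` (the usual convention `X_k = 0` for `k ≤ 0`). -/
theorem heinrichPhi_close_to_one (C0 h t : ℝ) (hC0 : 1 ≤ C0) (hh : 0 ≤ h)
    (u : ℂ) (hu : u = t * Complex.I + h)
    (Ω : Type*) [MeasurableSpace Ω] (μ : Measure Ω) [IsProbabilityMeasure μ]
    (n : ℕ) (X : ℕ → Ω → ℕ) (hX : ∀ i, Measurable (X i))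
    (hzero : ∀ ω, X 0 ω = 0)
    (hbd : ∀ i, 1 ≤ i → i ≤ n → ∀ᵐ ω ∂μ, ((X i ω : ℝ)) ≤ C0)
    (hdep : OneDependent μ n X)
    (a : ℝ) (ha : a = Real.exp (h * C0) * (2 + h) * Real.sqrt C0)
    (hsmall : ∀ j ∈ Finset.Icc 1 n, a ^ 2 * facMoment μ (X j) 1 ≤ 1 / 100) :
    ∀ k, 1 ≤ k → k ≤ n →
      heinrichPhi μ X u k ≠ 0 ∧
      ‖heinrichPhi μ X u k - 1‖ ≤
        (a ^ 2 / 6) * (10 * facMoment μ (X (k - 1)) 1 + 13 * facMoment μ (X k) 1) ∧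
      ‖heinrichPhi μ X u k - 1‖ ≤ 1 / 25 ∧
      1 / ‖heinrichPhi μ X u k‖ ≤ 10 / 9 := by
  have ha2 : 2 ≤ a := two_le_a hC0 hh ha
  have hnu : ∀ j, 0 ≤ facMoment μ (X j) 1 := fun j => facMoment_one_nonneg _
  have hnu0 : facMoment μ (X 0) 1 = 0 := by
    rw [facMoment_one_eq]
    simp [hzero]
  intro k
  induction k using Nat.strong_induction_on with
  | _ k IH =>
    intro hk1 hkn
    have key : Complex.abs (heinrichPhi μ X u k - 1)
        ≤ a ^ 2 / 6 * (10 * facMoment μ (X (k - 1)) 1 + 13 * facMoment μ (X k) 1) := by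
      match k, hk1, hkn with
      | 1, _, h1n =>
        have hbd1 := hbd 1 le_rfl h1n
        have hint : Integrable (fun ω => Complex.exp (u * (X 1 ω : ℂ)) - 1) μ :=
          integrable_Y hC0 hh hu ha (hX 1) hbd1
        have hintE : Integrable (fun ω => Complex.exp (u * (X 1 ω : ℂ))) μ := by
          have := hint.add (integrable_const (1:ℂ))
          refine this.congr (Filter.Eventually.of_forall fun ω => ?_)
          show (Complex.exp (u * (X 1 ω : ℂ)) - 1) + 1 = Complex.exp (u * (X 1 ω : ℂ))
          ring
        have hphi1 : heinrichPhi μ X u 1 - 1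
            = ∫ ω, (Complex.exp (u * (X 1 ω : ℂ)) - 1) ∂μ := by
          rw [show heinrichPhi μ X u 1 = ∫ ω, Complex.exp (u * (X 1 ω : ℂ)) ∂μ from by
            rw [heinrichPhi]]
          rw [integral_sub hintE (integrable_const (1:ℂ))]
          simp
        rw [hphi1]
        have hb := abs_integral_Y_le hC0 hh hu ha (hX 1) hbd1
        have hc : a * facMoment μ (X 1) 1 ≤ a ^ 2 / 2 * facMoment μ (X 1) 1 :=
          mul_le_mul_of_nonneg_right (by nlinarith) (hnu 1)
        simp only [Nat.sub_self, hnu0]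
        nlinarith [hnu 1]
      | (k' + 2), _, hkn' =>
        have hk1n : k' + 1 ≤ n := by omega
        have hbdk := hbd (k' + 2) (by omega) hkn'
        have hbdk1 := hbd (k' + 1) (by omega) hk1n
        have hphi : heinrichPhi μ X u (k' + 2) - 1
            = (∫ ω, (Complex.exp (u * (X (k' + 2) ω : ℂ)) - 1) ∂μ)
              + ∑ j ∈ (Finset.Icc 1 (k' + 1)).attach,
                heinrichE μ (fun i ω => Complex.exp (u * (X i ω : ℂ)) - 1) j.1 (k' + 2) /
                  ∏ i ∈ (Finset.Icc j.1 (k' + 1)).attach, heinrichPhi μ X u i.1 := by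
          rw [heinrichPhi]
          ring
        rw [hphi]
        rw [show ∀ z : ℂ, Complex.abs z = ‖z‖ from fun z => rfl]
        refine le_trans (norm_add_le _ _) ?_
        -- the E Y_k term
        have hA : ‖∫ ω, (Complex.exp (u * (X (k' + 2) ω : ℂ)) - 1) ∂μ‖
            ≤ a ^ 2 / 2 * facMoment μ (X (k' + 2)) 1 := by
          refine le_trans (abs_integral_Y_le hC0 hh hu ha (hX (k' + 2)) hbdk) ?_
          exact mul_le_mul_of_nonneg_right (by nlinarith) (hnu (k' + 2))
        -- the sum term
        set R : ℝ := rhoD μ X u (k' + 1) * rhoD μ X u (k' + 2) with hR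
        have hR0 : 0 ≤ R := mul_nonneg (rhoD_nonneg _) (rhoD_nonneg _)
        have hterm : ∀ j : {x // x ∈ Finset.Icc 1 (k' + 1)},
            ‖heinrichE μ (fun i ω => Complex.exp (u * (X i ω : ℂ)) - 1) j.1 (k' + 2) /
              ∏ i ∈ (Finset.Icc j.1 (k' + 1)).attach, heinrichPhi μ X u i.1‖
            ≤ (2/9) ^ (k' + 2 - j.1) * (10 * R) := by
          intro j
          obtain ⟨hj1, hjk⟩ := Finset.mem_Icc.1 j.2
          -- the denominator
          have hden : ∀ i ∈ Finset.Icc j.1 (k' + 1),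
              (9:ℝ)/10 ≤ Complex.abs (heinrichPhi μ X u i) := by
            intro i hi
            obtain ⟨hi1, hi2⟩ := Finset.mem_Icc.1 hi
            obtain ⟨hne, _, _, hinv⟩ := IH i (by omega) (by omega) (by omega)
            have hpos : 0 < Complex.abs (heinrichPhi μ X u i) :=
              (Complex.abs.pos_iff).2 hne
            change 1 / Complex.abs (heinrichPhi μ X u i) ≤ 10 / 9 at hinv
            rw [div_le_iff₀ hpos] at hinv
            linarith
          have hcard : (Finset.Icc j.1 (k' + 1)).card = k' + 2 - j.1 := by
            rw [Nat.card_Icc]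
          have hprodphi : ((9:ℝ)/10) ^ (k' + 2 - j.1)
              ≤ ‖∏ i ∈ (Finset.Icc j.1 (k' + 1)).attach, heinrichPhi μ X u i.1‖ := by
            rw [norm_prod]
            calc ((9:ℝ)/10) ^ (k' + 2 - j.1)
                = ∏ i ∈ (Finset.Icc j.1 (k' + 1)).attach, ((9:ℝ)/10) := by
                  rw [Finset.prod_const, Finset.card_attach, hcard]
              _ ≤ ∏ i ∈ (Finset.Icc j.1 (k' + 1)).attach, ‖heinrichPhi μ X u i.1‖ :=
                  Finset.prod_le_prod (fun i _ => by norm_num) (fun i _ => hden i.1 i.2)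
          have hpow_pos : (0:ℝ) < ((9:ℝ)/10) ^ (k' + 2 - j.1) := by positivity
          -- the numerator
          have hnum : ‖heinrichE μ (fun i ω => Complex.exp (u * (X i ω : ℂ)) - 1) j.1 (k' + 2)‖
              ≤ 2 ^ (k' + 2 - j.1) * ∏ i ∈ Finset.Icc j.1 (k' + 2), rhoD μ X u i :=
            heinrichE_bound hC0 hh hu ha hX hdep hbd (k' + 2) j.1 hj1 (by omega) hkn'
          have hsplitprod : (∏ i ∈ Finset.Icc j.1 (k' + 2), rhoD μ X u i)
              = (∏ i ∈ Finset.Icc j.1 k', rhoD μ X u i) * R := by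
            rw [hR, ← Finset.Ico_add_one_right_eq_Icc j.1 (k' + 2), show k' + 2 + 1 = k' + 3 from rfl, ← Finset.Ico_add_one_right_eq_Icc j.1 k',
              ← Finset.prod_Ico_consecutive (rhoD μ X u) (show j.1 ≤ k' + 1 by omega)
                (show k' + 1 ≤ k' + 3 by omega)]
            congr 1
            rw [show k' + 3 = (k' + 2) + 1 from rfl,
              Finset.prod_Ico_succ_top (by omega : k' + 1 ≤ k' + 2)]
            congr 1
            rw [show k' + 2 = (k' + 1) + 1 from rfl,
              Finset.prod_Ico_succ_top (by omega : k' + 1 ≤ k' + 1), Finset.Ico_self,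
              Finset.prod_empty, one_mul]
          have hmid : (∏ i ∈ Finset.Icc j.1 k', rhoD μ X u i)
              ≤ (1/10:ℝ) ^ (k' + 1 - j.1) := by
            calc (∏ i ∈ Finset.Icc j.1 k', rhoD μ X u i)
                ≤ ∏ i ∈ Finset.Icc j.1 k', (1/10:ℝ) := by
                  refine Finset.prod_le_prod (fun i _ => rhoD_nonneg i) (fun i hi => ?_)
                  obtain ⟨hi1, hi2⟩ := Finset.mem_Icc.1 hi
                  exact rhoD_le_tenth hC0 hh hu ha (hX i) (hbd i (by omega) (by omega))
                    (hsmall i (Finset.mem_Icc.2 ⟨by omega, by omega⟩))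
              _ = (1/10:ℝ) ^ (Finset.Icc j.1 k').card := by rw [Finset.prod_const]
              _ = (1/10:ℝ) ^ (k' + 1 - j.1) := by rw [Nat.card_Icc]
          -- put the pieces together
          have hid : ∀ e : ℕ, (2:ℝ) ^ (e + 1) * (1/10:ℝ) ^ e * ((10:ℝ)/9) ^ (e + 1)
              = 10 * (2/9:ℝ) ^ (e + 1) := by
            intro e
            induction e with
            | zero => norm_num
            | succ e ih =>
              rw [pow_succ (2:ℝ) (e + 1), pow_succ ((1:ℝ)/10) e, pow_succ ((10:ℝ)/9) (e + 1),
                pow_succ ((2:ℝ)/9) (e + 1)]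
              linear_combination (2/9 : ℝ) * ih
          obtain ⟨e, he⟩ : ∃ e, k' + 2 - j.1 = e + 1 := ⟨k' + 1 - j.1, by omega⟩
          have he' : k' + 1 - j.1 = e := by omega
          rw [norm_div]
          calc ‖heinrichE μ (fun i ω => Complex.exp (u * (X i ω : ℂ)) - 1) j.1 (k' + 2)‖ /
                ‖∏ i ∈ (Finset.Icc j.1 (k' + 1)).attach, heinrichPhi μ X u i.1‖
              ≤ (2 ^ (k' + 2 - j.1) * ((1/10:ℝ) ^ (k' + 1 - j.1) * R)) / ((9:ℝ)/10) ^ (k' + 2 - j.1) := by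
                refine div_le_div₀ (by positivity) ?_ hpow_pos hprodphi
                refine le_trans hnum ?_
                rw [hsplitprod]
                refine mul_le_mul_of_nonneg_left ?_ (by positivity)
                exact mul_le_mul_of_nonneg_right hmid hR0
            _ = (2:ℝ) ^ (e + 1) * (1/10:ℝ) ^ e * ((10:ℝ)/9) ^ (e + 1) * R := by
                rw [he, he']
                rw [div_eq_mul_inv, ← inv_pow, show ((9:ℝ)/10)⁻¹ = 10/9 by norm_num]
                ring
            _ = (2/9) ^ (k' + 2 - j.1) * (10 * R) := by
                rw [hid e, he]
                ring
        have hS : ‖∑ j ∈ (Finset.Icc 1 (k' + 1)).attach,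
            heinrichE μ (fun i ω => Complex.exp (u * (X i ω : ℂ)) - 1) j.1 (k' + 2) /
              ∏ i ∈ (Finset.Icc j.1 (k' + 1)).attach, heinrichPhi μ X u i.1‖
            ≤ (2/7) * (10 * R) := by
          refine le_trans (norm_sum_le _ _) ?_
          refine le_trans (Finset.sum_le_sum fun j _ => hterm j) ?_
          rw [← Finset.sum_mul]
          refine mul_le_mul_of_nonneg_right ?_ (by positivity)
          rw [Finset.sum_attach (Finset.Icc 1 (k' + 1)) (fun l => (2/9:ℝ) ^ (k' + 2 - l))]
          exact geom_tail_le k'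
        have hRv : R ≤ a ^ 2 / 2 * (facMoment μ (X (k' + 1)) 1 + facMoment μ (X (k' + 2)) 1) :=
          rhoD_pair_le hC0 hh hu ha (hX (k' + 1)) (hX (k' + 2)) hbdk1 hbdk
        have hred : (k' + 2) - 1 = k' + 1 := rfl
        rw [hred]
        nlinarith [hnu (k' + 1), hnu (k' + 2)]
    -- derive the remaining three statements
    have hsmk : a ^ 2 * facMoment μ (X k) 1 ≤ 1 / 100 :=
      hsmall k (Finset.mem_Icc.2 ⟨hk1, hkn⟩)
    have hsmk1 : a ^ 2 * facMoment μ (X (k - 1)) 1 ≤ 1 / 100 := by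
      rcases Nat.lt_or_ge k 2 with hlt | hge
      · have : k = 1 := by omega
        rw [this]
        simp only [Nat.sub_self, hnu0]
        norm_num
      · exact hsmall (k - 1) (Finset.mem_Icc.2 ⟨by omega, by omega⟩)
    have h25 : Complex.abs (heinrichPhi μ X u k - 1) ≤ 1 / 25 := by
      nlinarith [hnu (k - 1), hnu k]
    have htri : (1:ℝ) ≤ Complex.abs (heinrichPhi μ X u k)
        + Complex.abs (heinrichPhi μ X u k - 1) := by
      have h1 : heinrichPhi μ X u k - (heinrichPhi μ X u k - 1) = 1 := by ring
      calc (1:ℝ) = Complex.abs ((heinrichPhi μ X u k) - (heinrichPhi μ X u k - 1)) := by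
            rw [h1, map_one]
        _ ≤ _ := Complex.abs.sub_le_add _ _
    have habs : (24:ℝ)/25 ≤ Complex.abs (heinrichPhi μ X u k) := by linarith
    refine ⟨?_, key, h25, ?_⟩
    · intro h0
      rw [h0] at habs
      simp at habs
      linarith
    · show 1 / Complex.abs (heinrichPhi μ X u k) ≤ 10 / 9
      rw [div_le_iff₀ (by linarith : (0:ℝ) < Complex.abs (heinrichPhi μ X u k))]
      linarith
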